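/- Let a, b, c be weak compositions of length n. If a ⪯ b and a ⪯ c in the key poset, then a ⪯ b ∩ c, where (b ∩ c)_i = min(b_i, c_i). -/
import Mathlib


/-- The key poset order on weak compositions of length `n` (functions `Fin n → ℕ`):
`a ⪯ b` iff `a i ≤ b i` for all `i`, and for all `i < j`, if `b j > a j` and
`a i > a j` then `b i > b j`. -/
def KeyLE {n : ℕ} (a b : Fin n → ℕ) : Prop :=
  (∀ i, a i ≤ b i) ∧ ∀ i j : Fin n, i < j → a j < b j → a j < a i → b j < b i

/-- Strict key order. -/
def KeyLT {n : ℕ} (a b : Fin n → ℕ) : Prop := KeyLE a b ∧ a ≠ b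

/-- Cover relation in the key poset. -/
def KeyCovers {n : ℕ} (a b : Fin n → ℕ) : Prop :=
  KeyLT a b ∧ ¬ ∃ c : Fin n → ℕ, KeyLT a c ∧ KeyLT c b

/-- The rank of a weak composition: the sum of its parts. -/
def rk {n : ℕ} (a : Fin n → ℕ) : ℕ := ∑ i, a i

/-- If a ⪯ b and a ⪯ c then a ⪯ b ∩ c (componentwise minimum). -/
theorem keyLE_inter {n : ℕ} (a b c : Fin n → ℕ)
    (hb : KeyLE a b) (hc : KeyLE a c) :
    KeyLE a (fun i => min (b i) (c i)) := by
  refine ⟨fun i => le_min (hb.1 i) (hc.1 i), fun i j hij hj hji => ?_⟩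
  simp only at hj ⊢
  have h1 := hb.2 i j hij (lt_of_lt_of_le hj (min_le_left _ _)) hji
  have h2 := hc.2 i j hij (lt_of_lt_of_le hj (min_le_right _ _)) hji
  omega
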